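/- Let α, β ∈ (1/2, 1) with 1 < α + β < 3/2, δ > 0 small, r ∈ (1, 2), γ > 0 with γ ≤ δ^{2α+2β−1}/2, and let ω be the MOC with ω(ξ) = ξ − ξ^r on [0,δ] and ω'(ξ) = γξ^{1−2α−2β} for ξ > δ. Then for all ξ ≥ δ: γ ≤ ω(ξ) ξ^{2β+2α−2} and ω(2ξ) ≤ (3/2) ω(ξ). -/
import Mathlib

set_option maxHeartbeats 1000000


theorem subcritical_large_scale_bounds (r α β : ℝ) (hr1 : 1 < r) (hr2 : r < 2)
    (hα1 : 1 / 2 < α) (hα2 : α < 1) (hβ1 : 1 / 2 < β) (hβ2 : β < 1)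
    (hαβ1 : 1 < α + β) (hαβ2 : α + β < 3 / 2) :
    ∃ δ₀ : ℝ, 0 < δ₀ ∧ ∀ δ γ : ℝ, 0 < δ → δ ≤ δ₀ → 0 < γ →
      γ ≤ δ ^ (2 * α + 2 * β - 1) / 2 →
      let ω : ℝ → ℝ := fun ξ =>
        if ξ ≤ δ then ξ - ξ ^ r
        else (δ - δ ^ r) + γ * (ξ ^ (2 - 2 * α - 2 * β) - δ ^ (2 - 2 * α - 2 * β)) /
          (2 - 2 * α - 2 * β)
      ∀ ξ : ℝ, δ ≤ ξ →
        γ ≤ ω ξ * ξ ^ (2 * β + 2 * α - 2) ∧ ω (2 * ξ) ≤ (3 / 2) * ω ξ := by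
  have hr0 : 0 < r - 1 := by linarith
  refine ⟨(1/4 : ℝ) ^ (1/(r-1)), Real.rpow_pos_of_pos (by norm_num) _, ?_⟩
  intro δ γ hδ hδ0 hγ hγδ ω ξ hξ
  set t : ℝ := 2*α + 2*β - 2 with ht_def
  have ht : 0 < t := by rw [ht_def]; linarith
  have hξ0 : 0 < ξ := lt_of_lt_of_le hδ hξ
  -- δ^(r-1) ≤ 1/4
  have hδ41 : δ ^ (r-1) ≤ 1/4 := by
    calc δ ^ (r-1) ≤ ((1/4:ℝ) ^ (1/(r-1))) ^ (r-1) :=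
          Real.rpow_le_rpow hδ.le hδ0 hr0.le
      _ = 1/4 := by
          rw [← Real.rpow_mul (by norm_num),
            div_mul_cancel₀ 1 (ne_of_gt hr0), Real.rpow_one]
  have hδr : δ ^ r ≤ δ/4 := by
    have h1 : δ ^ r = δ * δ ^ (r-1) := by
      rw [show r = 1 + (r-1) by ring, Real.rpow_add hδ, Real.rpow_one]
      ring_nf
    rw [h1]
    nlinarith
  have hA : 3/4 * δ ≤ δ - δ ^ r := by linarith
  -- formula for ω on [δ, ∞)
  have hωval : ∀ x, δ ≤ x →
      ω x = (δ - δ ^ r) + γ * (δ ^ (-t) - x ^ (-t)) / t := by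
    intro x hx
    have he : (2 - 2*α - 2*β : ℝ) = -t := by rw [ht_def]; ring
    rcases eq_or_lt_of_le hx with h | h
    · rw [← h]; simp [ω]
    · have hx' : ¬ x ≤ δ := not_le.mpr h
      simp only [ω, if_neg hx', he]
      rw [div_neg]
      ring
  have hδx : ξ ^ (-t) ≤ δ ^ (-t) :=
    Real.rpow_le_rpow_of_nonpos hδ hξ (by linarith)
  -- key inequality: 3/2 γ ≤ ω ξ * ξ ^ t
  have hδt : δ ^ t ≤ ξ ^ t := Real.rpow_le_rpow hδ.le hξ ht.le
  have hδ2 : δ ^ (2*α + 2*β - 1) = δ * δ ^ t := by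
    rw [show (2*α + 2*β - 1 : ℝ) = 1 + t by rw [ht_def]; ring, Real.rpow_add hδ,
      Real.rpow_one]
  have hωξ : ω ξ = (δ - δ ^ r) + γ * (δ ^ (-t) - ξ ^ (-t)) / t := hωval ξ hξ
  have hωge : (δ - δ ^ r) ≤ ω ξ := by
    rw [hωξ]
    have : 0 ≤ γ * (δ ^ (-t) - ξ ^ (-t)) / t :=
      div_nonneg (mul_nonneg hγ.le (by linarith)) ht.le
    linarith
  have hδtpos : (0:ℝ) < δ ^ t := Real.rpow_pos_of_pos hδ t
  have key : 3/2 * γ ≤ ω ξ * ξ ^ t := by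
    have h1 : 3/2 * γ ≤ 3/4 * (δ * δ ^ t) := by rw [← hδ2]; linarith
    have h2 : 3/4 * δ * δ ^ t ≤ (δ - δ ^ r) * δ ^ t :=
      mul_le_mul_of_nonneg_right hA hδtpos.le
    have h3 : (δ - δ ^ r) * δ ^ t ≤ ω ξ * ξ ^ t :=
      mul_le_mul hωge hδt hδtpos.le (le_trans (by linarith) hωge)
    nlinarith
  constructor
  · rw [show (2*β + 2*α - 2 : ℝ) = t by rw [ht_def]; ring]
    linarith
  · -- second claim
    have h2ξ : δ ≤ 2*ξ := by linarith
    have hω2 := hωval (2*ξ) h2ξ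
    have hξtpos : (0:ℝ) < ξ ^ t := Real.rpow_pos_of_pos hξ0 t
    have hξnt : ξ ^ (-t) = (ξ ^ t)⁻¹ := Real.rpow_neg hξ0.le t
    -- (2ξ)^(-t) = 2^(-t) * ξ^(-t)
    have hsplit : (2*ξ) ^ (-t) = (2:ℝ) ^ (-t) * ξ ^ (-t) :=
      Real.mul_rpow (by norm_num) hξ0.le
    -- 1 - 2^(-t) ≤ (3/4) * t
    have hexp : 1 - (2:ℝ) ^ (-t) ≤ 3/4 * t := by
      have h1 : (2:ℝ) ^ (-t) = Real.exp (Real.log 2 * (-t)) :=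
        Real.rpow_def_of_pos (by norm_num) (-t)
      have h2 : Real.log 2 * (-t) + 1 ≤ Real.exp (Real.log 2 * (-t)) :=
        Real.add_one_le_exp _
      have h3 : Real.log 2 < 0.6931471808 := Real.log_two_lt_d9
      nlinarith [Real.log_nonneg (by norm_num : (1:ℝ) ≤ 2)]
    have hstep : γ * (ξ ^ (-t) - (2*ξ) ^ (-t)) / t ≤ 3/4 * γ * ξ ^ (-t) := by
      rw [hsplit]
      rw [div_le_iff₀ ht]
      have hξntpos : (0:ℝ) < ξ ^ (-t) := Real.rpow_pos_of_pos hξ0 (-t)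
      have : ξ ^ (-t) - (2:ℝ) ^ (-t) * ξ ^ (-t) = (1 - (2:ℝ) ^ (-t)) * ξ ^ (-t) := by
        ring
      rw [this]
      calc γ * ((1 - (2:ℝ) ^ (-t)) * ξ ^ (-t))
          ≤ γ * ((3/4 * t) * ξ ^ (-t)) :=
            mul_le_mul_of_nonneg_left
              (mul_le_mul_of_nonneg_right hexp hξntpos.le) hγ.le
        _ = 3/4 * γ * ξ ^ (-t) * t := by ring
    have hfin : 3/4 * γ * ξ ^ (-t) ≤ 1/2 * ω ξ := by
      rw [hξnt]
      rw [show (3/4 : ℝ) * γ * (ξ ^ t)⁻¹ = (3/4 * γ) / ξ ^ t by ring,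
        div_le_iff₀ hξtpos]
      linarith [key]
    rw [hωξ] at hfin
    rw [hω2, hωξ]
    have hdiff : (δ - δ ^ r) + γ * (δ ^ (-t) - (2*ξ) ^ (-t)) / t
        = ((δ - δ ^ r) + γ * (δ ^ (-t) - ξ ^ (-t)) / t)
          + γ * (ξ ^ (-t) - (2*ξ) ^ (-t)) / t := by ring
    linarith only [hstep, hfin, hdiff.le]
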